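/- arXiv:1011.4662 — 2 statements merged into one kernel-verified Lean document; each statement's English description precedes it below -/
import Mathlib

section
/- Let m_1 = x^a and m'' = x^c be monomials in k[x_1,…,x_n] with partial sums b_i = Σ_{j≤i} a_j and d_i = Σ_{j≤i} c_j. If B(m'') is not contained in the ideal ( x_{i, b_i+1} : 1 ≤ i ≤ n ) of Ŝ, then b_i ≥ d_i for all i. -/
open MvPolynomial CategoryTheory

namespace Pol


/-- Total degree of an exponent vector. -/
def degE {σ : Type} (a : σ →₀ ℕ) : ℕ := a.sum fun _ e => e

/-- `I` is a monomial ideal. -/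
def IsMonomialIdeal {σ k : Type} [CommRing k] (I : Ideal (MvPolynomial σ k)) : Prop :=
  ∃ A : Set (σ →₀ ℕ), I = Ideal.span ((fun a => (monomial a 1 : MvPolynomial σ k)) '' A)

/-- `I` is a squarefree monomial ideal. -/
def IsSquarefreeMonomialIdeal {σ k : Type} [CommRing k] (I : Ideal (MvPolynomial σ k)) : Prop :=
  ∃ A : Set (σ →₀ ℕ), (∀ a ∈ A, ∀ i, a i ≤ 1) ∧
    I = Ideal.span ((fun a => (monomial a 1 : MvPolynomial σ k)) '' A)

/-- Borel fixed (strongly stable) exchange property: `m ∈ I`, `x_i ∣ m`, `j < i`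
implies `(x_j/x_i)·m ∈ I`. -/
def IsBorelFixed {n : ℕ} {k : Type} [CommRing k] (I : Ideal (MvPolynomial (Fin n) k)) : Prop :=
  ∀ a : Fin n →₀ ℕ, (monomial a 1 : MvPolynomial (Fin n) k) ∈ I →
    ∀ i j : Fin n, j < i → a i ≠ 0 →
      (monomial (a + Finsupp.single j 1 - Finsupp.single i 1) 1 : MvPolynomial (Fin n) k) ∈ I

/-- `x^a` is a minimal generator of the monomial ideal `I`. -/
def IsMinGen {σ k : Type} [CommRing k] (I : Ideal (MvPolynomial σ k)) (a : σ →₀ ℕ) : Prop :=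
  (monomial a 1 : MvPolynomial σ k) ∈ I ∧
    ∀ i : σ, a i ≠ 0 → (monomial (a - Finsupp.single i 1) 1 : MvPolynomial σ k) ∉ I

/-- partial sum `b_i = a_1 + ⋯ + a_i` (cutoff `i : ℕ`, counting the first `i` variables). -/
def psum {n : ℕ} (a : Fin n →₀ ℕ) (i : ℕ) : ℕ :=
  ∑ j ∈ Finset.univ.filter (fun j : Fin n => (j : ℕ) < i), a j

/-- The exponent vector of `B(x^a)`: the variables `x_{i,j}` with
`b_{i-1}+1 ≤ j ≤ b_i` (in 0-indexed form `b_{i-1} ≤ j < b_i`). -/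
noncomputable def boxExp {n : ℕ} (d : ℕ) (a : Fin n →₀ ℕ) : (Fin n × Fin d) →₀ ℕ :=
  ∑ p ∈ Finset.univ.filter
      (fun p : Fin n × Fin d => psum a (p.1 : ℕ) ≤ (p.2 : ℕ) ∧ (p.2 : ℕ) < psum a ((p.1 : ℕ) + 1)),
    Finsupp.single p 1

/-- The exponent vector of the standard polarization `pol(x^a) = ∏_i x_{i,1} ⋯ x_{i,a_i}`. -/
noncomputable def polExp {n : ℕ} (d : ℕ) (a : Fin n →₀ ℕ) : (Fin n × Fin d) →₀ ℕ :=
  ∑ p ∈ Finset.univ.filter (fun p : Fin n × Fin d => (p.2 : ℕ) < a p.1), Finsupp.single p 1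

/-- `B(I)`, generated by `B(m)` for minimal generators `m` of `I`. -/
noncomputable def boxIdeal {n : ℕ} {k : Type} [CommRing k] (d : ℕ) (I : Ideal (MvPolynomial (Fin n) k)) :
    Ideal (MvPolynomial (Fin n × Fin d) k) :=
  Ideal.span {q | ∃ a : Fin n →₀ ℕ, IsMinGen I a ∧ q = monomial (boxExp d a) 1}

/-- The sequence `Θ = (x_{i,1} - x_{i,j})_{1 ≤ i ≤ n, 2 ≤ j ≤ d}` (0-indexed: `j ≥ 1`). -/
noncomputable def thetaList (n d : ℕ) (k : Type) [CommRing k] : List (MvPolynomial (Fin n × Fin d) k) :=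
  (List.finRange n).flatMap fun i =>
    ((List.finRange d).drop 1).map fun (j : Fin d) =>
      X (i, (⟨0, Nat.lt_of_le_of_lt (Nat.zero_le j.val) j.isLt⟩ : Fin d)) - X (i, j)

/-- The depolarization map `φ : Ŝ → S`, `x_{i,j} ↦ x_i`. -/
noncomputable def phi (n d : ℕ) (k : Type) [CommRing k] :
    MvPolynomial (Fin n × Fin d) k →ₐ[k] MvPolynomial (Fin n) k :=
  rename Prod.fst

lemma psum_mono {n : ℕ} (a : Fin n →₀ ℕ) {i j : ℕ} (h : i ≤ j) : psum a i ≤ psum a j :=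
  Finset.sum_le_sum_of_subset (by
    intro x hx
    simp only [Finset.mem_filter, Finset.mem_univ, true_and] at *
    omega)

lemma psum_le_degE {n : ℕ} (a : Fin n →₀ ℕ) (i : ℕ) : psum a i ≤ degE a := by
  have h : degE a = ∑ j : Fin n, a j := by
    rw [degE, Finsupp.sum_fintype]
    intro; rfl
  rw [h, psum]
  exact Finset.sum_le_sum_of_subset (Finset.filter_subset _ _)

lemma boxExp_apply_eq_one {n d : ℕ} (c : Fin n →₀ ℕ) (p : Fin n × Fin d)
    (h1 : psum c (p.1 : ℕ) ≤ (p.2 : ℕ)) (h2 : (p.2 : ℕ) < psum c ((p.1 : ℕ) + 1)) :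
    boxExp d c p = 1 := by
  rw [boxExp, Finsupp.finset_sum_apply]
  rw [Finset.sum_eq_single p]
  · simp
  · intro q _ hne; exact Finsupp.single_eq_of_ne' hne
  · intro hp; exact absurd (Finset.mem_filter.mpr ⟨Finset.mem_univ _, h1, h2⟩) hp

/-- Claim 2.1: if `B(x^c)` is not in the ideal `(x_{i,b_i+1} ∣ 1 ≤ i ≤ n)`,
where `b` are the partial sums of `a`, then `b_i ≥ d_i` for all `i` (`d` the partial sums
of `c`). -/
theorem psum_dominates_of_box_not_mem (n d : ℕ) (k : Type) [Field k] (a c : Fin n →₀ ℕ)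
    (hdega : degE a < d) (hdegc : degE c ≤ d)
    (hnot : (monomial (boxExp d c) 1 : MvPolynomial (Fin n × Fin d) k) ∉
      Ideal.span {q : MvPolynomial (Fin n × Fin d) k | ∃ i : Fin n,
        ∃ h : psum a ((i : ℕ) + 1) < d,
        q = X (i, (⟨psum a ((i : ℕ) + 1), h⟩ : Fin d))}) :
    ∀ i : ℕ, psum c i ≤ psum a i := by
  intro i
  induction i with
  | zero => simp [psum]
  | succ i ih =>
    by_cases hin : i < n
    · by_contra hlt
      push_neg at hlt
      have hd : psum a (i + 1) < d := lt_of_le_of_lt (psum_le_degE a _) hdega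
      set i' : Fin n := ⟨i, hin⟩ with hi'
      set p : Fin n × Fin d := (i', ⟨psum a (i + 1), hd⟩) with hp
      have h1 : psum c (p.1 : ℕ) ≤ (p.2 : ℕ) := le_trans ih (psum_mono a (Nat.le_succ i))
      have h2 : ((p.2 : ℕ) < psum c ((p.1 : ℕ) + 1)) := hlt
      have hval : boxExp d c p = 1 := boxExp_apply_eq_one c p h1 h2
      apply hnot
      have hXmem : (X p : MvPolynomial (Fin n × Fin d) k) ∈
          Ideal.span {q : MvPolynomial (Fin n × Fin d) k | ∃ i : Fin n,
            ∃ h : psum a ((i : ℕ) + 1) < d,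
            q = X (i, (⟨psum a ((i : ℕ) + 1), h⟩ : Fin d))} :=
        Ideal.subset_span ⟨i', hd, rfl⟩
      have hfac : (monomial (boxExp d c) 1 : MvPolynomial (Fin n × Fin d) k)
          = monomial (boxExp d c - Finsupp.single p 1) 1 * X p := by
        have hs : boxExp d c - Finsupp.single p 1 + Finsupp.single p 1 = boxExp d c := by
          apply Finsupp.ext
          intro q
          simp only [Finsupp.add_apply, Finsupp.tsub_apply, Finsupp.single_apply]
          by_cases hq : p = q
          · subst hq; rw [if_pos rfl, hval]
          · rw [if_neg hq]; omega
        rw [X, monomial_mul, mul_one, hs]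
      rw [hfac]
      exact Ideal.mul_mem_left _ _ hXmem
    · push_neg at hin
      have e1 : psum c (i + 1) = psum c i := by
        unfold psum; congr 1
        ext x
        simp only [Finset.mem_filter, Finset.mem_univ, true_and]
        have := x.isLt
        omega
      have e2 : psum a i ≤ psum a (i + 1) := psum_mono a (Nat.le_succ i)
      omega

end Pol
end

section
/- Let I be a Borel fixed monomial ideal in k[x_1,…,x_n], and let x^a and x^c be monomials with x^c ∈ I, with partial sums b_i = Σ_{j≤i} a_j and d_i = Σ_{j≤i} c_j. If b_i ≥ d_i for all i and deg(x^a) ≥ deg(x^c), then x^a ∈ I. -/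
open MvPolynomial CategoryTheory

namespace Pol


lemma psum_zero {n : ℕ} (a : Fin n →₀ ℕ) : psum a 0 = 0 := by
  simp [psum]

lemma psum_of_ge {n : ℕ} (a : Fin n →₀ ℕ) {s : ℕ} (h : n ≤ s) : psum a s = ∑ x, a x := by
  unfold psum
  congr 1
  apply Finset.filter_true_of_mem
  intro x _; exact lt_of_lt_of_le x.isLt h

lemma degE_eq_sum {n : ℕ} (a : Fin n →₀ ℕ) : degE a = ∑ x, a x := by
  rw [degE, Finsupp.sum_fintype]
  intro _; rfl

lemma psum_mono_s6 {n : ℕ} (a : Fin n →₀ ℕ) : Monotone (psum a) := by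
  intro s t hst
  apply Finset.sum_le_sum_of_subset
  intro x hx
  simp only [Finset.mem_filter, Finset.mem_univ, true_and] at *
  omega

lemma psum_succ {n : ℕ} (a : Fin n →₀ ℕ) (i : Fin n) :
    psum a ((i : ℕ) + 1) = psum a (i : ℕ) + a i := by
  unfold psum
  have : Finset.univ.filter (fun j : Fin n => (j : ℕ) < (i : ℕ) + 1)
      = insert i (Finset.univ.filter (fun j : Fin n => (j : ℕ) < (i : ℕ))) := by
    ext x
    simp only [Finset.mem_filter, Finset.mem_insert, Finset.mem_univ, true_and]
    constructor
    · intro h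
      rcases Nat.lt_succ_iff_lt_or_eq.mp h with h | h
      · exact Or.inr h
      · exact Or.inl (Fin.ext h)
    · rintro (rfl | h) <;> omega
  rw [this, Finset.sum_insert (by simp)]
  ring

lemma psum_add {n : ℕ} (f g : Fin n →₀ ℕ) (s : ℕ) :
    psum (f + g) s = psum f s + psum g s := by
  unfold psum
  simp [Finsupp.add_apply, Finset.sum_add_distrib]

lemma psum_single {n : ℕ} (w : Fin n) (m : ℕ) (s : ℕ) :
    psum (Finsupp.single w m) s = if (w : ℕ) < s then m else 0 := by
  unfold psum
  split_ifs with h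
  · rw [Finset.sum_eq_single w]
    · simp
    · intro b _ hb; simp [Finsupp.single_apply, Ne.symm hb]
    · intro h'; exact absurd (by simp [h]) h'
  · apply Finset.sum_eq_zero
    intro x hx
    simp only [Finset.mem_filter, Finset.mem_univ, true_and] at hx
    have : x ≠ w := by rintro rfl; exact h hx
    simp [Finsupp.single_apply, Ne.symm this]

lemma psum_tsub {n : ℕ} (f g : Fin n →₀ ℕ) (h : ∀ x, g x ≤ f x) (s : ℕ) :
    psum (f - g) s = psum f s - psum g s := by
  unfold psum
  rw [← Finset.sum_tsub_distrib _ (fun x _ => h x)]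
  rfl



lemma core_lemma (n : ℕ) (k : Type) [Field k] (I : Ideal (MvPolynomial (Fin n) k))
    (hB : IsBorelFixed I) (a : Fin n →₀ ℕ) :
    ∀ m : ℕ, ∀ c : Fin n →₀ ℕ,
      (∑ s ∈ Finset.range (n+1), (psum a s - psum c s)) = m →
      (monomial c 1 : MvPolynomial (Fin n) k) ∈ I →
      (∀ i, psum c i ≤ psum a i) → degE c = degE a →
      (monomial a 1 : MvPolynomial (Fin n) k) ∈ I := by
  intro m
  induction m using Nat.strong_induction_on with
  | _ m IH =>
    intro c hm hc hdom hdeg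
    by_cases hex : ∃ t, psum c t < psum a t
    · -- find minimal t
      have hdec : DecidablePred fun t => psum c t < psum a t := fun t => inferInstance
      set t := Nat.find hex with ht
      have hPt : psum c t < psum a t := Nat.find_spec hex
      have hmin : ∀ s < t, ¬ psum c s < psum a s := fun s hs => Nat.find_min hex hs
      have ht0 : 0 < t := by
        rcases Nat.eq_zero_or_pos t with h | h
        · rw [h] at hPt; simp [psum_zero] at hPt
        · exact h
      have hdegsum : ∑ x, c x = ∑ x, a x := by
        rw [← degE_eq_sum, ← degE_eq_sum, hdeg]
      have htn : t < n := by
        by_contra h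
        push_neg at h
        rw [psum_of_ge c h, psum_of_ge a h, hdegsum] at hPt
        omega
      -- find minimal idx ≥ t with c idx ≠ 0
      have hFne : (Finset.univ.filter (fun x : Fin n => t ≤ (x:ℕ) ∧ c x ≠ 0)).Nonempty := by
        by_contra h
        rw [Finset.not_nonempty_iff_eq_empty, Finset.filter_eq_empty_iff] at h
        have : psum c n = psum c t := by
          unfold psum
          apply (Finset.sum_subset _ _).symm
          · intro x hx
            simp only [Finset.mem_filter, Finset.mem_univ, true_and] at *
            omega
          · intro x _ hx
            simp only [Finset.mem_filter, Finset.mem_univ, true_and] at hx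
            push_neg at hx
            by_contra hcx
            exact (h (Finset.mem_univ x)) ⟨by omega, hcx⟩
        rw [psum_of_ge c (le_refl n)] at this
        have h2 : psum a t ≤ psum a n := psum_mono_s6 a (le_of_lt htn)
        rw [psum_of_ge a (le_refl n)] at h2
        omega
      obtain ⟨idx, ⟨hidxt, hidxc⟩, hidxmin⟩ :
          ∃ idx : Fin n, (t ≤ (idx:ℕ) ∧ c idx ≠ 0) ∧
            (∀ x : Fin n, t ≤ (x:ℕ) → c x ≠ 0 → idx ≤ x) := by
        refine ⟨(Finset.univ.filter (fun x : Fin n => t ≤ (x:ℕ) ∧ c x ≠ 0)).min' hFne, ?_, ?_⟩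
        · have := Finset.min'_mem _ hFne
          simpa using this
        · intro x h1 h2
          exact Finset.min'_le _ _ (by simp [h1, h2])
      -- target j
      have htj : t - 1 < n := by omega
      obtain ⟨j, hjval⟩ : ∃ j : Fin n, (j : ℕ) = t - 1 := ⟨⟨t - 1, htj⟩, rfl⟩
      have hji : j < idx := by
        rw [Fin.lt_def]; omega
      have hidxminval : ∀ x : Fin n, t ≤ (x:ℕ) → c x ≠ 0 → (idx:ℕ) ≤ (x:ℕ) := by
        intro x h1 h2
        exact (Fin.le_def).mp (hidxmin x h1 h2)
      set c₂ := c + Finsupp.single j 1 - Finsupp.single idx 1 with hc2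
      have hc₂mem : (monomial c₂ 1 : MvPolynomial (Fin n) k) ∈ I := hB c hc idx j hji hidxc
      -- psum formula
      have hle : ∀ x, (Finsupp.single idx 1 : Fin n →₀ ℕ) x ≤ (c + Finsupp.single j 1 : Fin n →₀ ℕ) x := by
        intro x
        have hne : j ≠ idx := Fin.ne_of_lt hji
        by_cases hx : x = idx
        · subst hx
          rw [Finsupp.add_apply, Finsupp.single_eq_same, Finsupp.single_eq_of_ne' hne]
          omega
        · simp [Finsupp.single_apply, Ne.symm hx]
      have hform : ∀ s, psum c₂ s =
          psum c s + (if (j:ℕ) < s then 1 else 0) - (if (idx:ℕ) < s then 1 else 0) := by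
        intro s
        rw [hc2, psum_tsub _ _ hle, psum_add, psum_single, psum_single]
      -- c constant between t and idx
      have hconst : ∀ s, t ≤ s → s ≤ (idx:ℕ) → psum c s = psum c t := by
        intro s h1 h2
        unfold psum
        apply (Finset.sum_subset _ _).symm
        · intro x hx
          simp only [Finset.mem_filter, Finset.mem_univ, true_and] at *
          omega
        · intro x hxs hx
          simp only [Finset.mem_filter, Finset.mem_univ, true_and] at hxs hx
          push_neg at hx
          by_contra hcx
          have := hidxminval x (by omega) hcx
          omega
      have hdomeq : ∀ s < t, psum c s = psum a s := by
        intro s hs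
        have := hmin s hs
        have := hdom s
        omega
      -- new dominance
      have hdom₂ : ∀ s, psum c₂ s ≤ psum a s := by
        intro s
        rw [hform]
        split_ifs with h1 h2
        · have := hdom s; omega
        · -- t ≤ s ≤ idx
          have hs1 : t ≤ s := by omega
          have hs2 : s ≤ (idx:ℕ) := by omega
          have := hconst s hs1 hs2
          have := psum_mono_s6 a (show t ≤ s from hs1)
          omega
        · omega
        · have := hdom s; omega
      -- degree preserved
      have hdeg₂ : degE c₂ = degE a := by
        rw [degE_eq_sum, degE_eq_sum, ← psum_of_ge c₂ (le_refl n), ← psum_of_ge a (le_refl n)]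
        rw [hform]
        have h1 : (j:ℕ) < n := by omega
        have h2 : (idx:ℕ) < n := idx.isLt
        simp only [h1, h2, if_true]
        have h3 := hdom n
        have : psum c n = psum a n := by
          rw [psum_of_ge c (le_refl n), psum_of_ge a (le_refl n), hdegsum]
        omega
      -- measure decreases
      have hc₂t : psum c₂ t = psum c t + 1 := by
        rw [hform]
        have h1 : (j:ℕ) < t := by omega
        have h2 : ¬ ((idx:ℕ) < t) := by omega
        simp [h1, h2]
      have hlt : (∑ s ∈ Finset.range (n+1), (psum a s - psum c₂ s)) < m := by
        rw [← hm]
        apply Finset.sum_lt_sum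
        · intro s _
          have h1 : psum c s ≤ psum c₂ s := by
            rw [hform]
            split_ifs <;> omega
          omega
        · refine ⟨t, Finset.mem_range.mpr (by omega), ?_⟩
          rw [hc₂t]
          omega
      exact IH _ hlt c₂ rfl hc₂mem hdom₂ hdeg₂
    · push_neg at hex
      have : a = c := by
        ext x
        have h1 := psum_succ a x
        have h2 := psum_succ c x
        have e1 : psum c (x:ℕ) = psum a (x:ℕ) := le_antisymm (hdom _) (hex _)
        have e2 : psum c ((x:ℕ)+1) = psum a ((x:ℕ)+1) := le_antisymm (hdom _) (hex _)
        omega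
      rw [this]; exact hc


/-- if `I` is Borel fixed, `x^c ∈ I`, the partial sums of `a` dominate those
of `c`, and `deg x^a ≥ deg x^c`, then `x^a ∈ I`. -/
theorem mem_of_psum_dominates (n : ℕ) (k : Type) [Field k]
    (I : Ideal (MvPolynomial (Fin n) k)) (hmon : IsMonomialIdeal I) (hB : IsBorelFixed I)
    (a c : Fin n →₀ ℕ) (hc : (monomial c 1 : MvPolynomial (Fin n) k) ∈ I)
    (hdom : ∀ i : ℕ, psum c i ≤ psum a i) (hdeg : degE c ≤ degE a) :
    (monomial a 1 : MvPolynomial (Fin n) k) ∈ I := by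
  rcases Nat.eq_zero_or_pos n with rfl | hn
  · have : a = c := by ext i; exact i.elim0
    rw [this]; exact hc
  · obtain ⟨last, hlv⟩ : ∃ l : Fin n, (l:ℕ) = n - 1 := ⟨⟨n-1, by omega⟩, rfl⟩
    have hc'mem : (monomial (c + Finsupp.single last (degE a - degE c)) 1 :
        MvPolynomial (Fin n) k) ∈ I := by
      have : (monomial (c + Finsupp.single last (degE a - degE c)) 1 :
          MvPolynomial (Fin n) k)
          = monomial (Finsupp.single last (degE a - degE c)) 1 * monomial c 1 := by
        rw [monomial_mul, one_mul, add_comm]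
      rw [this]
      exact Ideal.mul_mem_left _ _ hc
    have hms : ∀ f : Fin n →₀ ℕ, degE f = psum f n := by
      intro f; rw [degE_eq_sum, psum_of_ge f (le_refl n)]
    have hc'ps : ∀ s, psum (c + Finsupp.single last (degE a - degE c)) s
        = psum c s + (if (last:ℕ) < s then degE a - degE c else 0) := by
      intro s; rw [psum_add, psum_single]
    have hdom' : ∀ s, psum (c + Finsupp.single last (degE a - degE c)) s ≤ psum a s := by
      intro s
      rw [hc'ps]
      split_ifs with h
      · have hsn : n ≤ s := by omega
        rw [psum_of_ge c hsn, psum_of_ge a hsn, ← degE_eq_sum, ← degE_eq_sum]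
        omega
      · exact hdom s
    have hdeg' : degE (c + Finsupp.single last (degE a - degE c)) = degE a := by
      have h3 : psum (c + Finsupp.single last (degE a - degE c)) n = psum a n := by
        rw [hc'ps, if_pos (show (last:ℕ) < n by omega)]
        have e1 := hms c
        have e2 := hms a
        omega
      exact (hms _).trans (h3.trans (hms a).symm)
    exact core_lemma n k I hB a _ _ rfl hc'mem hdom' hdeg'

end Pol
end
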